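/- Let G_u and G_v be connected graphs with n_u and n_v vertices respectively, u a vertex of G_u and v a vertex of G_v. If G arises from G_u and G_v by identifying u with v, then W(G) = W(G_u) + W(G_v) + (n_u - 1)·t_{G_v}(v) + (n_v - 1)·t_{G_u}(u). -/

import Mathlib

/-- The Wiener index of a graph: the sum of distances over all unordered pairs of vertices. -/
noncomputable def wienerIndex {V : Type*} [Fintype V] (G : SimpleGraph V) : ℕ :=
  (∑ u : V, ∑ v : V, G.dist u v) / 2

/-- The transmission of a vertex: the sum of distances from it to all other vertices. -/
noncomputable def transmission {V : Type*} [Fintype V] (G : SimpleGraph V) (x : V) : ℕ :=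
  ∑ u : V, G.dist x u

/-- The graph obtained from `G` and `H` by identifying the vertex `u` of `G`
with the vertex `w` of `H` (one-point union). -/
def glue {V W : Type*} (G : SimpleGraph V) (H : SimpleGraph W) (u : V) (w : W) :
    SimpleGraph (V ⊕ {x : W // x ≠ w}) :=
  SimpleGraph.fromRel (fun a b =>
    match a, b with
    | Sum.inl a, Sum.inl b => G.Adj a b
    | Sum.inr a, Sum.inr b => H.Adj a.1 b.1
    | Sum.inl a, Sum.inr b => a = u ∧ H.Adj w b.1
    | _, _ => False)


section
variable {V W : Type*}

/-- projection to V -/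
def pV (u : V) (v : W) : V ⊕ {x : W // x ≠ v} → V := Sum.elim id (fun _ => u)
/-- projection to W -/
def pW (v : W) : V ⊕ {x : W // x ≠ v} → W := Sum.elim (fun _ => v) Subtype.val

variable {Gu : SimpleGraph V} {Gv : SimpleGraph W} {u : V} {v : W}

lemma glue_adj_cases {x y : V ⊕ {x : W // x ≠ v}} (h : (glue Gu Gv u v).Adj x y) :
    (Gu.Adj (pV u v x) (pV u v y) ∧ pW v x = pW v y) ∨
    (pV u v x = pV u v y ∧ Gv.Adj (pW v x) (pW v y)) := by
  rw [glue, SimpleGraph.fromRel_adj] at h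
  obtain ⟨hne, h | h⟩ := h
  · match x, y with
    | Sum.inl a, Sum.inl b => exact Or.inl ⟨h, rfl⟩
    | Sum.inr a, Sum.inr b => exact Or.inr ⟨rfl, h⟩
    | Sum.inl a, Sum.inr b => exact Or.inr ⟨by simp [pV, h.1], h.2⟩
  · match x, y with
    | Sum.inl a, Sum.inl b => exact Or.inl ⟨h.symm, rfl⟩
    | Sum.inr a, Sum.inr b => exact Or.inr ⟨rfl, h.symm⟩
    | Sum.inr a, Sum.inl b => exact Or.inr ⟨by simp [pV, h.1], h.2.symm⟩

/-- The inclusion of `Gu` into the glued graph is a graph hom. -/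
def inlHom (Gu : SimpleGraph V) (Gv : SimpleGraph W) (u : V) (v : W) :
    Gu →g glue Gu Gv u v where
  toFun := Sum.inl
  map_rel' := by
    intro a b h
    rw [glue, SimpleGraph.fromRel_adj]
    exact ⟨fun hc => h.ne (Sum.inl_injective hc), Or.inl h⟩

def fW [DecidableEq W] (u : V) (v : W) : W → V ⊕ {x : W // x ≠ v} :=
  fun b => if h : b = v then Sum.inl u else Sum.inr ⟨b, h⟩

lemma fW_of_ne [DecidableEq W] (u : V) {v : W} (b : {x : W // x ≠ v}) :
    fW u v b.1 = Sum.inr b := by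
  simp [fW, b.2]

lemma fW_v [DecidableEq W] (u : V) (v : W) : fW u v v = Sum.inl u := by simp [fW]

/-- The inclusion of `Gv` into the glued graph is a graph hom. -/
def inrHom [DecidableEq W] (Gu : SimpleGraph V) (Gv : SimpleGraph W) (u : V) (v : W) :
    Gv →g glue Gu Gv u v where
  toFun := fW u v
  map_rel' := by
    intro a b h
    rw [glue, SimpleGraph.fromRel_adj]
    unfold fW
    split_ifs with ha hb hb
    · exact absurd (ha.trans hb.symm) h.ne
    · subst ha; exact ⟨fun hc => Sum.inl_ne_inr hc, Or.inl ⟨rfl, h⟩⟩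
    · subst hb; exact ⟨fun hc => Sum.inr_ne_inl hc, Or.inr ⟨rfl, h.symm⟩⟩
    · exact ⟨fun hc => h.ne (congrArg Subtype.val (Sum.inr_injective hc)), Or.inl h⟩
end

section
variable {V W : Type*} {Gu : SimpleGraph V} {Gv : SimpleGraph W} {u : V} {v : W}
open SimpleGraph

lemma walk_proj {x y : V ⊕ {x : W // x ≠ v}} (p : (glue Gu Gv u v).Walk x y) :
    ∃ (q : Gu.Walk (pV u v x) (pV u v y)) (r : Gv.Walk (pW v x) (pW v y)),
      q.length + r.length ≤ p.length := by
  induction p with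
  | nil => exact ⟨Walk.nil, Walk.nil, le_refl 0⟩
  | cons h p ih =>
    obtain ⟨q, r, hle⟩ := ih
    rcases glue_adj_cases h with ⟨ha, he⟩ | ⟨he, ha⟩
    · exact ⟨Walk.cons ha q, r.copy he.symm rfl, by
        simp only [Walk.length_cons, Walk.length_copy]; omega⟩
    · exact ⟨q.copy he.symm rfl, Walk.cons ha r, by
        simp only [Walk.length_cons, Walk.length_copy]; omega⟩

variable [DecidableEq W]

lemma glue_reachable (hGu : Gu.Connected) (hGv : Gv.Connected)
    (x y : V ⊕ {x : W // x ≠ v}) : (glue Gu Gv u v).Reachable x y := by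
  have hV : ∀ a : V, (glue Gu Gv u v).Reachable (Sum.inl a) (Sum.inl u) :=
    fun a => ((hGu a u).map (inlHom Gu Gv u v))
  have hW : ∀ b : {x : W // x ≠ v}, (glue Gu Gv u v).Reachable (Sum.inr b) (Sum.inl u) := by
    intro b
    have := (hGv b.1 v).map (inrHom Gu Gv u v)
    rwa [show (inrHom Gu Gv u v) b.1 = Sum.inr b from fW_of_ne u b,
      show (inrHom Gu Gv u v) v = Sum.inl u from fW_v u v] at this
  have key : ∀ z : V ⊕ {x : W // x ≠ v}, (glue Gu Gv u v).Reachable z (Sum.inl u) := by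
    rintro (a | b); exacts [hV a, hW b]
  exact (key x).trans (key y).symm

lemma dist_glue_inl_inl (hGu : Gu.Connected) (hGv : Gv.Connected) (a b : V) :
    (glue Gu Gv u v).dist (Sum.inl a) (Sum.inl b) = Gu.dist a b := by
  apply le_antisymm
  · obtain ⟨p, hp⟩ := hGu.exists_walk_length_eq_dist a b
    calc (glue Gu Gv u v).dist (Sum.inl a) (Sum.inl b) ≤ (p.map (inlHom Gu Gv u v)).length :=
          dist_le _
      _ = Gu.dist a b := by rw [Walk.length_map, hp]
  · obtain ⟨p, hp⟩ := (glue_reachable hGu hGv (Sum.inl a) (Sum.inl b)).exists_walk_length_eq_dist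
    obtain ⟨q, r, hle⟩ := walk_proj p
    calc Gu.dist a b ≤ q.length := dist_le q
      _ ≤ p.length := le_trans (Nat.le_add_right _ _) hle
      _ = _ := hp

lemma dist_glue_inr_inr (hGu : Gu.Connected) (hGv : Gv.Connected) (a b : {x : W // x ≠ v}) :
    (glue Gu Gv u v).dist (Sum.inr a) (Sum.inr b) = Gv.dist a.1 b.1 := by
  apply le_antisymm
  · obtain ⟨p, hp⟩ := hGv.exists_walk_length_eq_dist a.1 b.1
    calc (glue Gu Gv u v).dist (Sum.inr a) (Sum.inr b)
        ≤ ((p.map (inrHom Gu Gv u v)).copy (fW_of_ne u a) (fW_of_ne u b)).length := dist_le _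
      _ = Gv.dist a.1 b.1 := by exact (Walk.length_copy _ _ _).trans ((Walk.length_map _ _).trans hp)
  · obtain ⟨p, hp⟩ := (glue_reachable hGu hGv (Sum.inr a) (Sum.inr b)).exists_walk_length_eq_dist
    obtain ⟨q, r, hle⟩ := walk_proj p
    calc Gv.dist a.1 b.1 ≤ r.length := dist_le r
      _ ≤ p.length := le_trans (Nat.le_add_left _ _) hle
      _ = _ := hp

lemma dist_glue_inl_inr (hGu : Gu.Connected) (hGv : Gv.Connected) (a : V) (b : {x : W // x ≠ v}) :
    (glue Gu Gv u v).dist (Sum.inl a) (Sum.inr b) = Gu.dist a u + Gv.dist v b.1 := by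
  apply le_antisymm
  · obtain ⟨p, hp⟩ := hGu.exists_walk_length_eq_dist a u
    obtain ⟨q, hq⟩ := hGv.exists_walk_length_eq_dist v b.1
    calc (glue Gu Gv u v).dist (Sum.inl a) (Sum.inr b)
        ≤ ((p.map (inlHom Gu Gv u v)).append
            ((q.map (inrHom Gu Gv u v)).copy (fW_v u v) (fW_of_ne u b))).length := dist_le _
      _ = Gu.dist a u + Gv.dist v b.1 := by
        simp [Walk.length_append, Walk.length_copy, Walk.length_map, hp, hq]
        exact (Walk.length_copy _ _ _).trans ((Walk.length_map _ _).trans hq)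
  · obtain ⟨p, hp⟩ := (glue_reachable hGu hGv (Sum.inl a) (Sum.inr b)).exists_walk_length_eq_dist
    obtain ⟨q, r, hle⟩ := walk_proj p
    calc Gu.dist a u + Gv.dist v b.1 ≤ q.length + r.length :=
          Nat.add_le_add (dist_le q) (dist_le r)
      _ ≤ p.length := hle
      _ = _ := hp

end

lemma even_pair_sum {V : Type*} (f : V → V → ℕ) (hs : ∀ a b, f a b = f b a)
    (hd : ∀ a, f a a = 0) (s : Finset V) : Even (∑ a ∈ s, ∑ b ∈ s, f a b) := by
  classical
  induction s using Finset.induction_on with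
  | empty => simp
  | insert x s hx ih =>
    obtain ⟨k, hk⟩ := ih
    have h1 : ∀ a, ∑ b ∈ insert x s, f a b = f a x + ∑ b ∈ s, f a b :=
      fun a => Finset.sum_insert hx
    have h2 : ∑ a ∈ s, f a x = ∑ a ∈ s, f x a := Finset.sum_congr rfl fun a _ => hs a x
    rw [Finset.sum_insert hx]
    simp only [h1, Finset.sum_add_distrib, hd, h2, hk]
    exact ⟨∑ b ∈ s, f x b + k, by omega⟩

lemma sum_subtype_ne {W : Type*} [Fintype W] [DecidableEq W] (v : W) (g : W → ℕ) :
    (∑ b : {x : W // x ≠ v}, g b.1) + g v = ∑ b : W, g b := by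
  rw [← Finset.sum_subtype (p := fun x => x ≠ v) (Finset.univ.erase v)
    (fun x => by simp [Finset.mem_erase]) g]
  rw [add_comm, Finset.add_sum_erase _ g (Finset.mem_univ v)]

lemma card_subtype_ne {W : Type*} [Fintype W] [DecidableEq W] (v : W) :
    Fintype.card {x : W // x ≠ v} = Fintype.card W - 1 := by
  simp [Fintype.card_subtype_compl (fun x => x = v)]



section
variable {V W : Type*} {Gu : SimpleGraph V} {Gv : SimpleGraph W} {u : V} {v : W}
  [DecidableEq W]
open SimpleGraph

lemma dist_glue_inr_inl (hGu : Gu.Connected) (hGv : Gv.Connected)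
    (a : {x : W // x ≠ v}) (b : V) :
    (glue Gu Gv u v).dist (Sum.inr a) (Sum.inl b) = Gu.dist b u + Gv.dist v a.1 := by
  rw [SimpleGraph.dist_comm]; exact dist_glue_inl_inr hGu hGv b a
end

/-- Polansky's lemma: if `G` arises from `G_u` and `G_v` by identifying
`u` with `v`, then `W(G) = W(G_u) + W(G_v) + (n_u - 1) t_{G_v}(v) + (n_v - 1) t_{G_u}(u)`. -/
theorem wienerIndex_glue {V W : Type*} [Fintype V] [Fintype W] [DecidableEq W]
    (Gu : SimpleGraph V) (Gv : SimpleGraph W)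
    (hGu : Gu.Connected) (hGv : Gv.Connected) (u : V) (v : W) :
    wienerIndex (glue Gu Gv u v) =
      wienerIndex Gu + wienerIndex Gv +
        (Fintype.card V - 1) * transmission Gv v +
        (Fintype.card W - 1) * transmission Gu u := by
  classical
  have hVne : Nonempty V := hGu.nonempty
  have hcardV : 1 ≤ Fintype.card V := Fintype.card_pos
  have hTu : ∑ a : V, Gu.dist a u = transmission Gu u :=
    Finset.sum_congr rfl fun a _ => SimpleGraph.dist_comm
  have hTv' : ∑ b : {x : W // x ≠ v}, Gv.dist v b.1 = transmission Gv v := by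
    have h := sum_subtype_ne v (fun b => Gv.dist v b)
    unfold transmission
    simpa [SimpleGraph.dist_self] using h
  have hSv : ∑ a : W, ∑ b : W, Gv.dist a b
      = (∑ a : {x : W // x ≠ v}, ∑ b : {x : W // x ≠ v}, Gv.dist a.1 b.1)
        + 2 * transmission Gv v := by
    rw [← sum_subtype_ne v (fun a => ∑ b : W, Gv.dist a b)]
    have h1 : ∀ a : W, ∑ b : W, Gv.dist a b
        = (∑ b : {x : W // x ≠ v}, Gv.dist a b.1) + Gv.dist a v :=
      fun a => (sum_subtype_ne v (fun b => Gv.dist a b)).symm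
    simp only [h1]
    rw [Finset.sum_add_distrib]
    have h2 : ∑ a : {x : W // x ≠ v}, Gv.dist a.1 v = transmission Gv v := by
      rw [← hTv']; exact Finset.sum_congr rfl fun a _ => SimpleGraph.dist_comm
    rw [h2, SimpleGraph.dist_self, hTv']
    omega
  -- cross sums
  have e1 : ∑ a : V, ∑ b : {x : W // x ≠ v}, (Gu.dist a u + Gv.dist v b.1)
      = (Fintype.card W - 1) * transmission Gu u
        + Fintype.card V * transmission Gv v := by
    simp only [Finset.sum_add_distrib, Finset.sum_const, Finset.card_univ, smul_eq_mul,
      hTv']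
    rw [← Finset.mul_sum, hTu, card_subtype_ne]
  have e2 : ∑ a : {x : W // x ≠ v}, ∑ b : V, (Gu.dist b u + Gv.dist v a.1)
      = (Fintype.card W - 1) * transmission Gu u
        + Fintype.card V * transmission Gv v := by
    simp only [Finset.sum_add_distrib, Finset.sum_const, Finset.card_univ, smul_eq_mul,
      hTu]
    rw [← Finset.mul_sum, hTv', card_subtype_ne]
  have hS : (∑ x : V ⊕ {x : W // x ≠ v}, ∑ y : V ⊕ {x : W // x ≠ v},
        (glue Gu Gv u v).dist x y)
      = (∑ a : V, ∑ b : V, Gu.dist a b)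
        + (∑ a : {x : W // x ≠ v}, ∑ b : {x : W // x ≠ v}, Gv.dist a.1 b.1)
        + 2 * ((Fintype.card W - 1) * transmission Gu u
            + Fintype.card V * transmission Gv v) := by
    simp only [Fintype.sum_sum_type]
    simp only [dist_glue_inl_inl hGu hGv, dist_glue_inr_inr hGu hGv,
      dist_glue_inl_inr hGu hGv, dist_glue_inr_inl hGu hGv]
    rw [Finset.sum_add_distrib, Finset.sum_add_distrib, e1, e2]
    ring
  have hA : Fintype.card V * transmission Gv v
      = (Fintype.card V - 1) * transmission Gv v + transmission Gv v := by
    have h1 : Fintype.card V - 1 + 1 = Fintype.card V := Nat.succ_pred_eq_of_pos hcardV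
    calc Fintype.card V * transmission Gv v
        = (Fintype.card V - 1 + 1) * transmission Gv v := by rw [h1]
      _ = _ := by ring
  obtain ⟨su, hsu⟩ := even_pair_sum Gu.dist (fun a b => SimpleGraph.dist_comm)
    (fun a => SimpleGraph.dist_self) Finset.univ
  obtain ⟨sv, hsv⟩ := even_pair_sum Gv.dist (fun a b => SimpleGraph.dist_comm)
    (fun a => SimpleGraph.dist_self) Finset.univ
  unfold wienerIndex
  omega
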